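/- arXiv:1111.6312 — 2 statements merged into one kernel-verified Lean document; each statement's English description precedes it below -/
import Mathlib

section
/- Let $y > 0$ and $k \ge 0$ an integer. Then $\int_0^y z^k e^{-z/2}\,dz \ge 2^{k+1} k! \left(1 - (1 + y/2)^k e^{-y/2}\right)$. -/
open MeasureTheory Real

lemma rec_step (y : ℝ) (k : ℕ) :
    (∫ z in (0:ℝ)..y, z ^ (k+1) * Real.exp (-z / 2)) =
      -2 * y ^ (k+1) * Real.exp (-y / 2) +
        2 * (k+1) * ∫ z in (0:ℝ)..y, z ^ k * Real.exp (-z / 2) := by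
  have h := intervalIntegral.integral_mul_deriv_eq_deriv_mul
    (u := fun z : ℝ => z ^ (k+1)) (u' := fun z : ℝ => (k+1) * z ^ k)
    (v := fun z : ℝ => -2 * Real.exp (-z / 2)) (v' := fun z : ℝ => Real.exp (-z / 2))
    (a := 0) (b := y)
    (fun x _ => by
      simpa using (hasDerivAt_pow (k+1) x))
    (fun x _ => by
      have h1 : HasDerivAt (fun z : ℝ => -z / 2) (-(1/2)) x := by
        have := ((hasDerivAt_id x).neg.div_const 2)
        norm_num at this
        simpa using this
      have h2 := (h1.exp).const_mul (-2 : ℝ)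
      convert h2 using 1
      ring)
    (by
      apply Continuous.intervalIntegrable
      continuity)
    (by
      apply Continuous.intervalIntegrable
      continuity)
  rw [h]
  have : (∫ x in (0:ℝ)..y, (((k:ℝ)+1) * x ^ k) * (-2 * Real.exp (-x / 2)))
      = -2 * (k+1) * ∫ x in (0:ℝ)..y, x ^ k * Real.exp (-x / 2) := by
    rw [← intervalIntegral.integral_const_mul]
    congr 1; ext x; ring
  rw [this]
  ring

theorem stmt_2 (y : ℝ) (hy : 0 < y) (k : ℕ) :
    (∫ z in (0:ℝ)..y, z ^ k * Real.exp (-z / 2)) ≥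
      2 ^ (k + 1) * (Nat.factorial k) * (1 - (1 + y / 2) ^ k * Real.exp (-y / 2)) := by
  induction k with
  | zero =>
    have hbase : (∫ z in (0:ℝ)..y, z ^ 0 * Real.exp (-z / 2)) =
        -2 * Real.exp (-y/2) - (-2 * Real.exp (-(0:ℝ)/2)) := by
      have h := intervalIntegral.integral_eq_sub_of_hasDerivAt
        (f := fun z : ℝ => -2 * Real.exp (-z / 2))
        (f' := fun z : ℝ => z ^ 0 * Real.exp (-z / 2)) (a := 0) (b := y)
        (fun x _ => by
          have h1 : HasDerivAt (fun z : ℝ => -z / 2) (-(1/2)) x := by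
            have := ((hasDerivAt_id x).neg.div_const 2)
            norm_num at this
            simpa using this
          have h2 := (h1.exp).const_mul (-2 : ℝ)
          convert h2 using 1
          case e'_4 => rfl
          simp; ring)
        (by
          apply Continuous.intervalIntegrable
          continuity)
      simpa using h
    rw [hbase]
    norm_num
    linarith
  | succ k ih =>
    rw [rec_step y k]
    have he : 0 < Real.exp (-y/2) := Real.exp_pos _
    have hP : (1:ℝ) ≤ (1 + y/2) ^ k := one_le_pow₀ (by linarith)
    have hF : (1:ℝ) ≤ (Nat.factorial k : ℝ) := by
      exact_mod_cast Nat.one_le_iff_ne_zero.mpr (Nat.factorial_ne_zero k)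
    have hkey : y ^ k ≤ 2 ^ k * (1 + y/2) ^ k := by
      have h1 : y ^ k ≤ (2 + y) ^ k := pow_le_pow_left₀ hy.le (by linarith) k
      have h2 : ((2:ℝ) + y) ^ k = 2 ^ k * (1 + y/2) ^ k := by
        rw [show (2:ℝ) + y = 2 * (1 + y/2) by ring, mul_pow]
      linarith
    have hfact : ((Nat.factorial (k+1) : ℝ)) = ((k:ℝ)+1) * (Nat.factorial k : ℝ) := by
      push_cast [Nat.factorial_succ]; ring
    push_cast [hfact]
    have ha1 : (1:ℝ) ≤ (k:ℝ) + 1 := by have := Nat.cast_nonneg (α:=ℝ) k; linarith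
    have h1 : 2 * ((k:ℝ)+1) * (∫ (z : ℝ) in (0:ℝ)..y, z ^ k * rexp (-z / 2)) ≥
        2 * ((k:ℝ)+1) * (2 ^ (k+1) * (Nat.factorial k : ℝ) * (1 - (1 + y/2)^k * rexp (-y/2))) := by
      apply mul_le_mul_of_nonneg_left ih
      positivity
    have h2 : (y ^ k * y) * rexp (-y/2) ≤ (2 ^ k * (1 + y/2)^k * y) * rexp (-y/2) :=
      mul_le_mul_of_nonneg_right (mul_le_mul_of_nonneg_right hkey hy.le) he.le
    have h3 : (2 ^ k * (1 + y/2)^k * y) * rexp (-y/2) ≤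
        ((((k:ℝ)+1) * (Nat.factorial k : ℝ))) * ((2 ^ k * (1 + y/2)^k * y) * rexp (-y/2)) := by
      nth_rewrite 1 [← one_mul ((2 ^ k * (1 + y/2)^k * y) * rexp (-y/2))]
      apply mul_le_mul_of_nonneg_right _ (by positivity)
      nlinarith
    rw [ge_iff_le, show (-y/2) = -(y/2) by ring] at *
    rw [pow_succ (1+y/2) k, pow_succ y k, show k+1+1 = (k+1)+1 from rfl, pow_succ 2 (k+1)]
    rw [pow_succ 2 k] at h1 ⊢
    nlinarith [h1, h2, h3]
end

section
/- Let $a, b > 0$, $T > 0$, and let $g, r : [0,T] \to \mathbb{R}$ with $g$ differentiable, $g \ge 0$, $g(0) = 0$, and $g'(t) \le a\,g(t) + b\,g(t)^2 + r(t)$ for all $t \in [0,T]$. Fix $t \in [0,T]$ and set $\varrho(t) := \int_0^t e^{-a s} r(s)\,ds$, assuming $\varrho(s) \le \varrho(t)$ for all $s \le t$ and $\varrho(t) > 0$. If $a - b\,\varrho(t)(e^{at} - 1) > 0$, then $g(t) \le \dfrac{a\, e^{at}\, \varrho(t)}{a - b\,\varrho(t)(e^{at}-1)}$. -/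
open MeasureTheory Set Real

theorem stmt_10 (a b T : ℝ) (ha : 0 < a) (hb : 0 < b) (hT : 0 < T)
    (g g' r : ℝ → ℝ)
    (hg' : ∀ s ∈ Set.Icc (0 : ℝ) T, HasDerivAt g (g' s) s)
    (hgpos : ∀ s ∈ Set.Icc (0 : ℝ) T, 0 ≤ g s)
    (hg0 : g 0 = 0)
    (hineq : ∀ s ∈ Set.Icc (0 : ℝ) T, g' s ≤ a * g s + b * (g s) ^ 2 + r s)
    (hr : IntervalIntegrable r volume 0 T)
    (t : ℝ) (ht : t ∈ Set.Icc (0 : ℝ) T)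
    (ϱ : ℝ → ℝ) (hϱ : ∀ s, ϱ s = ∫ u in (0:ℝ)..s, Real.exp (-a * u) * r u)
    (hmono : ∀ s ∈ Set.Icc (0 : ℝ) t, ϱ s ≤ ϱ t)
    (hϱpos : 0 < ϱ t)
    (hcond : 0 < a - b * ϱ t * (Real.exp (a * t) - 1)) :
    g t ≤ a * Real.exp (a * t) * ϱ t / (a - b * ϱ t * (Real.exp (a * t) - 1)) := by
  have hϱ0 : ϱ 0 = 0 := by rw [hϱ 0, intervalIntegral.integral_same]
  have ht0 : 0 < t := by
    rcases ht.1.lt_or_eq with h | h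
    · exact h
    · exfalso; rw [← h, hϱ0] at hϱpos; exact lt_irrefl 0 hϱpos
  set E := Real.exp (a * t) with hE
  have hE1 : 1 < E := Real.one_lt_exp_iff.2 (by positivity)
  have hsubT : Set.Icc (0:ℝ) t ⊆ Set.Icc (0:ℝ) T := Set.Icc_subset_Icc le_rfl ht.2
  -- the integrand of ϱ
  set φ : ℝ → ℝ := fun u => Real.exp (-a * u) * r u with hφdef
  have hφT : IntervalIntegrable φ volume 0 T :=
    hr.continuousOn_mul (Continuous.continuousOn (by continuity))
  have hφt : ∀ s ∈ Set.Icc (0:ℝ) t, IntervalIntegrable φ volume 0 s := fun s hs =>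
    hφT.mono_set (by
      rw [Set.uIcc_of_le hs.1, Set.uIcc_of_le (le_trans hs.1 (le_trans hs.2 ht.2))]
      exact Set.Icc_subset_Icc le_rfl (le_trans hs.2 ht.2))
  -- continuity of ϱ on [0, t]
  have hϱcont : ContinuousOn ϱ (Set.Icc 0 t) := by
    have h1 : ContinuousOn (fun s => ∫ u in (0:ℝ)..s, φ u) (Set.uIcc 0 t) :=
      intervalIntegral.continuousOn_primitive_interval' (hφt t (Set.right_mem_Icc.2 ht0.le))
        Set.left_mem_uIcc
    rw [Set.uIcc_of_le ht0.le] at h1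
    exact h1.congr fun s _ => hϱ s
  -- G = e^{-as} g, its derivative and bound
  set G : ℝ → ℝ := fun s => Real.exp (-a * s) * g s with hGdef
  have hGd : ∀ s ∈ Set.Icc (0:ℝ) T,
      HasDerivAt G (Real.exp (-a * s) * (-a) * g s + Real.exp (-a * s) * g' s) s := by
    intro s hs
    have hinner : HasDerivAt (fun y : ℝ => -a * y) (-a) s := by
      simpa only [mul_one, id_eq] using (hasDerivAt_id s).const_mul (-a)
    exact hinner.exp.mul (hg' s hs)
  have hGcont : ContinuousOn G (Set.Icc 0 t) := fun s hs =>
    ((hGd s (hsubT hs)).continuousAt).continuousWithinAt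
  have hGnonneg : ∀ s ∈ Set.Icc (0:ℝ) t, 0 ≤ G s := fun s hs => by
    have := hgpos s (hsubT hs); positivity
  -- the key comparison
  have key : ∀ A : ℝ, ϱ t < A → 0 < a - b * A * (E - 1) →
      g t ≤ E * (a * A / (a - b * A * (E - 1))) := by
    intro A hA hDA
    have hA0 : 0 < A := lt_trans hϱpos hA
    set D : ℝ → ℝ := fun s => a - b * A * (Real.exp (a * s) - 1) with hDdef
    have hDpos : ∀ s ∈ Set.Icc (0:ℝ) t, 0 < D s := by
      intro s hs
      have hle : Real.exp (a * s) ≤ E := Real.exp_le_exp.2 (by nlinarith [hs.2])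
      have hba : 0 < b * A := mul_pos hb hA0
      have : a - b * A * (E - 1) ≤ D s := by
        simp only [hDdef]; nlinarith
      linarith
    set v : ℝ → ℝ := fun s => a * A / D s with hvdef
    have hDd : ∀ s : ℝ, HasDerivAt D (-(b * A * (Real.exp (a * s) * a))) s := by
      intro s
      have hinner : HasDerivAt (fun y : ℝ => a * y) a s := by
        simpa only [mul_one, id_eq] using (hasDerivAt_id s).const_mul a
      have := ((hinner.exp.sub_const 1).const_mul (b * A)).const_sub a
      simpa [hDdef, mul_comm, mul_assoc, mul_left_comm] using this
    have hvd : ∀ s ∈ Set.Icc (0:ℝ) t,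
        HasDerivAt v (b * Real.exp (a * s) * (v s) ^ 2) s := by
      intro s hs
      have h0 := (hasDerivAt_const s (a * A)).div (hDd s) (hDpos s hs).ne'
      refine h0.congr_deriv ?_
      simp only [hvdef]
      field_simp
      ring
    have hvcont : ContinuousOn v (Set.Icc 0 t) := fun s hs =>
      ((hvd s hs).continuousAt).continuousWithinAt
    have hv0 : v 0 = A := by simp [hvdef, hDdef, ha.ne']
    have hvpos : ∀ s ∈ Set.Icc (0:ℝ) t, 0 < v s := fun s hs => by
      have := hDpos s hs; simp only [hvdef]; positivity
    -- u = G + ϱ t - ϱ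
    set u : ℝ → ℝ := fun s => G s + ϱ t - ϱ s with hudef
    have hucont : ContinuousOn u (Set.Icc 0 t) :=
      (hGcont.add continuousOn_const).sub hϱcont
    have hu0 : u 0 = ϱ t := by simp [hudef, hGdef, hg0, hϱ0]
    -- main claim: u ≤ v on [0, t]
    have claim : ∀ s ∈ Set.Icc (0:ℝ) t, u s ≤ v s := by
      by_contra hcon
      push_neg at hcon
      obtain ⟨s₁, hs₁, hs₁'⟩ := hcon
      set S : Set ℝ := Set.Icc 0 t ∩ (fun s => (v s, u s)) ⁻¹' {p : ℝ × ℝ | p.1 ≤ p.2}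
        with hSdef
      have hScl : IsClosed S :=
        ((hvcont.prodMk hucont).preimage_isClosed_of_isClosed isClosed_Icc isClosed_le_prod)
      have hSne : S.Nonempty := ⟨s₁, hs₁, hs₁'.le⟩
      have hSbdd : BddBelow S := ⟨0, fun x hx => hx.1.1⟩
      set s₀ := sInf S with hs₀def
      have hs₀S : s₀ ∈ S := hScl.csInf_mem hSne hSbdd
      have hs₀mem : s₀ ∈ Set.Icc (0:ℝ) t := hs₀S.1
      have h0S : (0:ℝ) ∉ S := by
        intro h0
        have : v 0 ≤ u 0 := h0.2
        rw [hv0, hu0] at this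
        linarith
      have hs₀pos : 0 < s₀ := by
        rcases hs₀mem.1.lt_or_eq with h | h
        · exact h
        · exact absurd (h ▸ hs₀S) h0S
      have hlt : ∀ x ∈ Set.Ioo (0:ℝ) s₀, u x < v x := by
        intro x hx
        by_contra hxc
        push_neg at hxc
        have hxS : x ∈ S := ⟨⟨hx.1.le, le_trans hx.2.le hs₀mem.2⟩, hxc⟩
        exact absurd (csInf_le hSbdd hxS) (not_le.2 hx.2)
      -- the FTC-type inequality on [0, s₀]
      have hsub₀ : Set.Icc (0:ℝ) s₀ ⊆ Set.Icc (0:ℝ) t :=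
        Set.Icc_subset_Icc le_rfl hs₀mem.2
      have hFTC : (G s₀ - v s₀) - (G 0 - v 0) ≤ ∫ y in (0:ℝ)..s₀, φ y := by
        apply intervalIntegral.sub_le_integral_of_hasDeriv_right_of_le hs₀pos.le
          ((hGcont.mono hsub₀).sub (hvcont.mono hsub₀))
          (g' := fun x => (Real.exp (-a * x) * (-a) * g x + Real.exp (-a * x) * g' x)
            - b * Real.exp (a * x) * (v x) ^ 2)
        · intro x hx
          have hxt : x ∈ Set.Icc (0:ℝ) t := hsub₀ (Set.Ioo_subset_Icc_self hx)
          exact ((hGd x (hsubT hxt)).sub (hvd x hxt)).hasDerivWithinAt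
        · exact (intervalIntegrable_iff_integrableOn_Icc_of_le hs₀pos.le).1 (hφt s₀ hs₀mem)
        · intro x hx
          have hxt : x ∈ Set.Icc (0:ℝ) t := hsub₀ (Set.Ioo_subset_Icc_self hx)
          have hxT : x ∈ Set.Icc (0:ℝ) T := hsubT hxt
          have h1 : g' x ≤ a * g x + b * (g x) ^ 2 + r x := hineq x hxT
          have h2 : G x ≤ v x := by
            have h3 : u x < v x := hlt x hx
            have h4 : ϱ x ≤ ϱ t := hmono x hxt
            simp only [hudef] at h3
            linarith
          have h5 : 0 ≤ G x := hGnonneg x hxt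
          have hvx : 0 < v x := hvpos x hxt
          have h6 : (G x) ^ 2 ≤ (v x) ^ 2 := by nlinarith
          have hxe : Real.exp (a * x) * Real.exp (-a * x) = 1 := by
            rw [← Real.exp_add, show a * x + -a * x = 0 by ring, Real.exp_zero]
          have h9 : b * Real.exp (a * x) * (G x) ^ 2 =
              Real.exp (-a * x) * (b * (g x) ^ 2) := by
            simp only [hGdef]
            rw [mul_pow]
            linear_combination (b * (g x) ^ 2 * Real.exp (-a * x)) * hxe
          have h8 : Real.exp (-a * x) * g' x ≤
              Real.exp (-a * x) * (a * g x + b * (g x) ^ 2 + r x) :=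
            mul_le_mul_of_nonneg_left h1 (Real.exp_nonneg _)
          have h7 : Real.exp (-a * x) * (-a) * g x + Real.exp (-a * x) * g' x
              ≤ b * Real.exp (a * x) * (G x) ^ 2 + φ x := by
            simp only [hφdef]
            rw [h9]
            linarith [h8]
          have h10 : b * Real.exp (a * x) * (G x) ^ 2 ≤ b * Real.exp (a * x) * (v x) ^ 2 := by
            have hbe : 0 ≤ b * Real.exp (a * x) := by positivity
            exact mul_le_mul_of_nonneg_left h6 hbe
          linarith
      -- derive the contradiction
      rw [← hϱ s₀] at hFTC
      have hG0 : G 0 = 0 := by simp [hGdef, hg0]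
      have hvu : v s₀ ≤ u s₀ := hs₀S.2
      have hGs₀ : v s₀ - ϱ t + ϱ s₀ ≤ G s₀ := by
        simp only [hudef] at hvu; linarith
      rw [hG0, hv0] at hFTC
      linarith
    -- evaluate the claim at s = t
    have hclt := claim t (Set.right_mem_Icc.2 ht0.le)
    have hutv : u t = G t := by simp [hudef]
    rw [hutv] at hclt
    simp only [hGdef, hvdef, hDdef] at hclt
    have hEpos : 0 < E := lt_trans one_pos hE1
    have hexpinv : Real.exp (-a * t) = E⁻¹ := by
      rw [hE, ← Real.exp_neg, neg_mul]
    rw [hexpinv] at hclt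
    calc g t = E * (E⁻¹ * g t) := by field_simp
    _ ≤ E * (a * A / (a - b * A * (E - 1))) := by
        apply mul_le_mul_of_nonneg_left hclt hEpos.le
  -- take the limit A → ϱ t⁺
  set d : ℝ := a - b * ϱ t * (E - 1) with hddef
  set A₁ : ℝ := ϱ t + d / (b * (E - 1)) with hA₁def
  have hbE : 0 < b * (E - 1) := by nlinarith
  have hA₁ : ϱ t < A₁ := by
    have : 0 < d / (b * (E - 1)) := div_pos hcond hbE
    simp only [hA₁def]; linarith
  have hev : ∀ A ∈ Set.Ioo (ϱ t) A₁, g t ≤ E * (a * A / (a - b * A * (E - 1))) := by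
    intro A hA
    apply key A hA.1
    have h1 : A < A₁ := hA.2
    have h2 : b * A * (E - 1) < b * A₁ * (E - 1) := by nlinarith
    have hE0 : (0:ℝ) < E - 1 := by linarith
    have h3 : b * A₁ * (E - 1) = b * ϱ t * (E - 1) + d := by
      simp only [hA₁def]; field_simp
    simp only [hddef] at h3
    linarith
  have hF : ContinuousAt (fun A => E * (a * A / (a - b * A * (E - 1)))) (ϱ t) := by
    apply ContinuousAt.mul continuousAt_const
    apply ContinuousAt.div
    · exact (continuous_const.mul continuous_id).continuousAt
    · exact (continuous_const.sub ((continuous_const.mul continuous_id).mul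
        continuous_const)).continuousAt
    · simpa using hcond.ne'
  have htend : Filter.Tendsto (fun A => E * (a * A / (a - b * A * (E - 1))))
      (nhdsWithin (ϱ t) (Set.Ioi (ϱ t))) (nhds (E * (a * ϱ t / (a - b * ϱ t * (E - 1))))) :=
    hF.continuousWithinAt.tendsto
  have hfinal : g t ≤ E * (a * ϱ t / (a - b * ϱ t * (E - 1))) := by
    apply ge_of_tendsto htend
    filter_upwards [Ioo_mem_nhdsGT_of_mem ⟨le_rfl, hA₁⟩] with A hA using hev A hA
  calc g t ≤ E * (a * ϱ t / (a - b * ϱ t * (E - 1))) := hfinal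
  _ = a * E * ϱ t / (a - b * ϱ t * (E - 1)) := by ring
end
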